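/- Let p ≥ 1 and let G_p : [0,1]^p → ℝ^{p+1} be G_p(s_0,…,s_{p−1}) = (1−s_0)e_0 + s_0(1−s_1)e_1 + ⋯ + s_0⋯s_{p−2}(1−s_{p−1})e_{p−1} + s_0⋯s_{p−1}e_p. Then: (1) at every point of the open cube (0,1)^p the differential of G_p is injective (has rank p); (2) G_p restricted to (0,1)^p is injective; (3) at every point of (0,1)^p, the determinant of the (p+1)×(p+1) matrix whose first column is the all-ones vector and whose remaining p columns are ∂G_p/∂s_0, …, ∂G_p/∂s_{p−1} is strictly positive. -/

import Mathlib

open MeasureTheory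
open scoped BigOperators

noncomputable section

/-- ℝ^{n+1} -/
abbrev Vec (n : ℕ) := Fin (n + 1) → ℝ

/-- standard basis vector e_i -/
def eVec (n : ℕ) (i : Fin (n + 1)) : Vec n := Pi.single i 1

/-- Raw (not necessarily alternating) inhomogeneous forms: a family of
degree-`p` "forms" given as functions of a point and a `p`-tuple of vectors. -/
def MForm (n : ℕ) := (p : ℕ) → Vec n → (Fin p → Vec n) → ℝ

/-- Embed a raw `p`-form as an inhomogeneous form concentrated in degree `p`. -/
def ofDeg (n p : ℕ) (ω : Vec n → (Fin p → Vec n) → ℝ) : MForm n :=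
  fun q t v => if h : q = p then ω t (fun i => v (Fin.cast h.symm i)) else 0

/-- Exterior derivative. -/
def exd (n : ℕ) (F : MForm n) : MForm n :=
  fun q => match q with
  | 0 => fun _ _ => 0
  | (p + 1) => fun t v =>
      ∑ j : Fin (p + 1), (-1 : ℝ) ^ (j : ℕ) *
        fderiv ℝ (fun x => F p x (fun i => v (Fin.succAbove j i))) t (v j)

/-- The Dupont operator `h^i`. -/
def hOp (n : ℕ) (i : Fin (n + 1)) (F : MForm n) : MForm n :=
  fun p t v =>
    ∫ s in (0:ℝ)..1, (1 - s) ^ p *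
      F (p + 1) ((1 - s) • t + s • eVec n i) (Fin.cons (eVec n i - t) v)

/-- Iterated Dupont operators `h^{i_k} ∘ ⋯ ∘ h^{i_0}`. -/
def hTuple (n : ℕ) {m : ℕ} (c : Fin m → Fin (n + 1)) (F : MForm n) : MForm n :=
  (List.ofFn c).foldl (fun G i => hOp n i G) F

/-- The Whitney form ω_{c 0, …, c p}. -/
def whitney (n p : ℕ) (c : Fin (p + 1) → Fin (n + 1)) :
    Vec n → (Fin p → Vec n) → ℝ :=
  fun t v => ∑ l : Fin (p + 1), (-1 : ℝ) ^ (l : ℕ) * t (c l) *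
    Matrix.det (Matrix.of fun a b : Fin p => v a (c (Fin.succAbove l b)))

/-- ω̄ = p! ω. -/
def whitneyBar (n p : ℕ) (c : Fin (p + 1) → Fin (n + 1)) :
    Vec n → (Fin p → Vec n) → ℝ :=
  fun t v => (Nat.factorial p : ℝ) * whitney n p c t v

/-- Wedge of a homogeneous `k`-form with an inhomogeneous form. -/
def wedgeHom (n k : ℕ) (α : Vec n → (Fin k → Vec n) → ℝ) (G : MForm n) : MForm n :=
  fun q t v =>
    if h : k ≤ q then
      ((Nat.factorial k : ℝ) * (Nat.factorial (q - k) : ℝ))⁻¹ *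
        ∑ σ : Equiv.Perm (Fin q), ((Equiv.Perm.sign σ : ℤ) : ℝ) *
          α t (fun i => v (σ (Fin.castLE h i))) *
          G (q - k) t (fun j => v (σ (Fin.cast (Nat.add_sub_cancel' h) (Fin.natAdd k j))))
    else 0

open scoped Classical in
/-- The Dupont homotopy. -/
def sDup (n : ℕ) (F : MForm n) : MForm n :=
  fun q t v => - ∑ k ∈ Finset.range n,
    ∑ c ∈ Finset.univ.filter (fun c : Fin (k + 1) → Fin (n + 1) => StrictMono c),
      wedgeHom n k (whitneyBar n k c) (hTuple n c F) q t v

/-- The unit cube [0,1]^p. -/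
def cubeSet (p : ℕ) : Set (Fin p → ℝ) := Set.univ.pi fun _ => Set.Icc (0:ℝ) 1

/-- Canonical parametrization of the simplex with vertices `verts`. -/
def GmapV (n p : ℕ) (verts : Fin (p + 1) → Vec n) : (Fin p → ℝ) → Vec n :=
  fun s => ∑ l : Fin (p + 1),
    ((∏ b ∈ Finset.univ.filter (fun b : Fin p => (b : ℕ) < (l : ℕ)), s b) *
      (if h : (l : ℕ) < p then 1 - s ⟨l, h⟩ else 1)) • verts l

/-- Integral of a raw `p`-form over the simplex with vertices `verts`. -/
def simplexIntV (n p : ℕ) (verts : Fin (p + 1) → Vec n)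
    (ω : Vec n → (Fin p → Vec n) → ℝ) : ℝ :=
  ∫ s in cubeSet p, ω (GmapV n p verts s)
      (fun a => fderiv ℝ (GmapV n p verts) s (Pi.single a 1))

/-- ∫_{[c 0, …, c p]} ω. -/
def simplexInt (n p : ℕ) (c : Fin (p + 1) → Fin (n + 1))
    (ω : Vec n → (Fin p → Vec n) → ℝ) : ℝ :=
  simplexIntV n p (fun l => eVec n (c l)) ω

open scoped Classical in
/-- (WR)(ω) for a homogeneous raw p-form ω. -/
def WRhom (n p : ℕ) (ω : Vec n → (Fin p → Vec n) → ℝ) :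
    Vec n → (Fin p → Vec n) → ℝ :=
  fun t v =>
    ∑ c ∈ Finset.univ.filter (fun c : Fin (p + 1) → Fin (n + 1) => StrictMono c),
      simplexInt n p c ω * whitneyBar n p c t v

/-- The canonical parametrization `G_p : [0,1]^p → ℝ^{p+1}` of the standard
`p`-simplex. -/
def Gstd (p : ℕ) : (Fin p → ℝ) → Vec p := GmapV p p (fun l => eVec p l)

/-- The `(p+1) × (p+1)` matrix whose first column is the all-ones vector and whose
remaining columns are the partial derivatives `∂G_p/∂s_a`. -/
def GstdMat (p : ℕ) (s : Fin p → ℝ) : Matrix (Fin (p + 1)) (Fin (p + 1)) ℝ :=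
  Matrix.of fun r c =>
    Fin.cases (motive := fun _ => ℝ) 1
      (fun a => fderiv ℝ (Gstd p) s (Pi.single a 1) r) c


namespace GstdAux

open Finset

variable {p : ℕ}

/-- Factor functions: `Gstd p s r = ∏ b, phi p r b (s b)`. -/
def phi (p : ℕ) (r : Fin (p + 1)) (b : Fin p) (x : ℝ) : ℝ :=
  if (b : ℕ) < (r : ℕ) then x else if (b : ℕ) = (r : ℕ) then 1 - x else 1

def phi' (p : ℕ) (r : Fin (p + 1)) (b : Fin p) : ℝ :=
  if (b : ℕ) < (r : ℕ) then 1 else if (b : ℕ) = (r : ℕ) then -1 else 0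

lemma Gstd_apply (p : ℕ) (s : Fin p → ℝ) (r : Fin (p + 1)) :
    Gstd p s r =
      (∏ b ∈ univ.filter (fun b : Fin p => (b : ℕ) < (r : ℕ)), s b) *
        (if h : (r : ℕ) < p then 1 - s ⟨r, h⟩ else 1) := by
  simp only [Gstd, GmapV, eVec, Finset.sum_apply, Pi.smul_apply, Pi.single_apply,
    smul_eq_mul]
  rw [Finset.sum_eq_single r]
  · simp
  · intro l _ hl
    simp [Ne.symm hl]
  · simp

lemma prod_phi (s : Fin p → ℝ) (r : Fin (p + 1)) :
    ∏ b : Fin p, phi p r b (s b) =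
      (∏ b ∈ univ.filter (fun b : Fin p => (b : ℕ) < (r : ℕ)), s b) *
        (if h : (r : ℕ) < p then 1 - s ⟨r, h⟩ else 1) := by
  rw [← Finset.prod_filter_mul_prod_filter_not univ (fun b : Fin p => (b : ℕ) < (r : ℕ))
    (fun b => phi p r b (s b))]
  congr 1
  · exact Finset.prod_congr rfl fun b hb => if_pos (Finset.mem_filter.mp hb).2
  · by_cases h : (r : ℕ) < p
    · rw [dif_pos h, Finset.prod_eq_single ⟨r, h⟩]
      · simp [phi]
      · intro b hb hne
        have hb' : ¬ ((b : ℕ) < (r : ℕ)) := (Finset.mem_filter.mp hb).2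
        have hb'' : (b : ℕ) ≠ (r : ℕ) := fun hc => hne (Fin.ext hc)
        simp [phi, hb', hb'']
      · intro hmem
        exact absurd (Finset.mem_filter.mpr ⟨Finset.mem_univ _, by simp⟩) hmem
    · rw [dif_neg h]
      apply Finset.prod_eq_one
      intro b hb
      have h2 := (Finset.mem_filter.mp hb).2
      exact absurd b.isLt (by omega)

lemma Gstd_apply_phi (p : ℕ) (s : Fin p → ℝ) (r : Fin (p + 1)) :
    Gstd p s r = ∏ b : Fin p, phi p r b (s b) := by
  rw [Gstd_apply, prod_phi]

/-- The derivative of the `r`-th coordinate of `Gstd`. -/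
def Lder (p : ℕ) (r : Fin (p + 1)) (s : Fin p → ℝ) : (Fin p → ℝ) →L[ℝ] ℝ :=
  ∑ b : Fin p, (∏ j ∈ univ.erase b, phi p r j (s j)) •
    (phi' p r b • (ContinuousLinearMap.proj b : (Fin p → ℝ) →L[ℝ] ℝ))

lemma hasFDerivAt_factor (r : Fin (p + 1)) (b : Fin p) (s : Fin p → ℝ) :
    HasFDerivAt (fun t : Fin p → ℝ => phi p r b (t b))
      (phi' p r b • (ContinuousLinearMap.proj b : (Fin p → ℝ) →L[ℝ] ℝ)) s := by
  unfold phi phi'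
  by_cases h1 : (b : ℕ) < (r : ℕ)
  · simp only [if_pos h1, one_smul]
    exact hasFDerivAt_apply (𝕜 := ℝ) b s
  · by_cases h2 : (b : ℕ) = (r : ℕ)
    · simp only [if_neg h1, if_pos h2]
      have h : HasFDerivAt (fun t : Fin p → ℝ => 1 - t b)
          ((0 : (Fin p → ℝ) →L[ℝ] ℝ) - (ContinuousLinearMap.proj b : (Fin p → ℝ) →L[ℝ] ℝ)) s :=
        (hasFDerivAt_const (1 : ℝ) s).fun_sub (hasFDerivAt_apply (𝕜 := ℝ) b s)
      refine h.congr_fderiv ?_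
      ext v
      simp
    · simp only [if_neg h1, if_neg h2, zero_smul]
      exact hasFDerivAt_const 1 s

lemma hasFDerivAt_coord (r : Fin (p + 1)) (s : Fin p → ℝ) :
    HasFDerivAt (fun t : Fin p → ℝ => Gstd p t r) (Lder p r s) s := by
  have heq : (fun t : Fin p → ℝ => Gstd p t r)
      = fun t : Fin p → ℝ => ∏ b : Fin p, phi p r b (t b) :=
    funext fun t => Gstd_apply_phi p t r
  rw [heq]
  exact HasFDerivAt.finset_prod (fun b _ => hasFDerivAt_factor r b s)

lemma hasFDerivAt_Gstd (s : Fin p → ℝ) :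
    HasFDerivAt (Gstd p) (ContinuousLinearMap.pi fun r => Lder p r s) s :=
  hasFDerivAt_pi.mpr fun r => hasFDerivAt_coord r s

/-- Entries of the Jacobian matrix. -/
def Mval (p : ℕ) (s : Fin p → ℝ) (r : Fin (p + 1)) (b : Fin p) : ℝ :=
  (∏ j ∈ univ.erase b, phi p r j (s j)) * phi' p r b

lemma Lder_apply (r : Fin (p + 1)) (s v : Fin p → ℝ) :
    Lder p r s v = ∑ b : Fin p, Mval p s r b * v b := by
  simp only [Lder, Mval, ContinuousLinearMap.sum_apply, ContinuousLinearMap.smul_apply,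
    ContinuousLinearMap.proj_apply, smul_eq_mul]
  exact Finset.sum_congr rfl fun b _ => by ring

lemma fderiv_Gstd_apply (s v : Fin p → ℝ) (r : Fin (p + 1)) :
    fderiv ℝ (Gstd p) s v r = ∑ b : Fin p, Mval p s r b * v b := by
  rw [(hasFDerivAt_Gstd s).fderiv]
  rw [ContinuousLinearMap.pi_apply, Lder_apply]

lemma fderiv_Gstd_single (s : Fin p → ℝ) (a : Fin p) (r : Fin (p + 1)) :
    fderiv ℝ (Gstd p) s (Pi.single a 1) r = Mval p s r a := by
  rw [fderiv_Gstd_apply, Finset.sum_eq_single a]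
  · simp
  · intro b _ hb
    simp [Pi.single_apply, hb]
  · intro h
    exact absurd (Finset.mem_univ a) h

lemma phi_pos {s : Fin p → ℝ} (hs : ∀ a, s a ∈ Set.Ioo (0 : ℝ) 1) (r : Fin (p + 1))
    (b : Fin p) : 0 < phi p r b (s b) := by
  have h := hs b
  unfold phi
  split_ifs
  · exact h.1
  · linarith [h.2]
  · norm_num

lemma phi'_zero {r : Fin (p + 1)} {b : Fin p} (h : (r : ℕ) < (b : ℕ)) : phi' p r b = 0 := by
  unfold phi'
  rw [if_neg (by omega), if_neg (by omega)]

lemma Mval_zero (s : Fin p → ℝ) {r : Fin (p + 1)} {b : Fin p} (h : (r : ℕ) < (b : ℕ)) :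
    Mval p s r b = 0 := by
  simp [Mval, phi'_zero h]

/-- `Pprod s k = ∏_{b < k} s b`. -/
def Pprod (s : Fin p → ℝ) (k : ℕ) : ℝ :=
  ∏ j ∈ univ.filter (fun j : Fin p => (j : ℕ) < k), s j

lemma Pprod_pos {s : Fin p → ℝ} (hs : ∀ a, s a ∈ Set.Ioo (0 : ℝ) 1) (k : ℕ) :
    0 < Pprod s k :=
  Finset.prod_pos fun j _ => (hs j).1

lemma Mval_diag (s : Fin p → ℝ) (a : Fin p) :
    Mval p s (Fin.castSucc a) a = -(Pprod s (a : ℕ)) := by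
  have h1 : phi' p (Fin.castSucc a) a = -1 := by
    simp [phi']
  have h2 : ∏ j ∈ univ.erase a, phi p (Fin.castSucc a) j (s j) = Pprod s (a : ℕ) := by
    calc ∏ j ∈ univ.erase a, phi p (Fin.castSucc a) j (s j)
        = ∏ j ∈ univ.erase a, (if (j : ℕ) < (a : ℕ) then s j else 1) := by
          refine Finset.prod_congr rfl fun j hj => ?_
          have hj' : j ≠ a := (Finset.mem_erase.mp hj).1
          by_cases h : (j : ℕ) < (a : ℕ)
          · simp [phi, h]
          · have hne : (j : ℕ) ≠ (a : ℕ) := fun hc => hj' (Fin.ext hc)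
            simp [phi, h, hne]
      _ = ∏ j ∈ (univ.erase a).filter (fun j : Fin p => (j : ℕ) < (a : ℕ)), s j :=
          (Finset.prod_filter _ _).symm
      _ = Pprod s (a : ℕ) := by
          unfold Pprod
          congr 1
          ext j
          simp only [Finset.mem_filter, Finset.mem_erase, Finset.mem_univ, true_and,
            and_true]
          constructor
          · rintro ⟨_, h⟩; exact h
          · intro h; exact ⟨fun hc => by simp [hc] at h, h⟩
  rw [Mval, h1, h2]
  ring

lemma Pprod_succ (s : Fin p → ℝ) {k : ℕ} (hk : k < p) :
    Pprod s (k + 1) = Pprod s k * s ⟨k, hk⟩ := by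
  unfold Pprod
  rw [show univ.filter (fun j : Fin p => (j : ℕ) < k + 1)
      = insert (⟨k, hk⟩ : Fin p) (univ.filter fun j : Fin p => (j : ℕ) < k) from ?_,
    Finset.prod_insert (by simp)]
  · ring
  · ext j
    simp only [Finset.mem_filter, Finset.mem_univ, true_and, Finset.mem_insert, Fin.ext_iff]
    omega

lemma Gstd_castSucc (s : Fin p → ℝ) (a : Fin p) :
    Gstd p s (Fin.castSucc a) = Pprod s (a : ℕ) * (1 - s a) := by
  rw [Gstd_apply]
  have hlt : ((Fin.castSucc a : Fin (p + 1)) : ℕ) < p := by simpa using a.isLt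
  rw [dif_pos hlt]
  have h1 : (⟨((Fin.castSucc a : Fin (p + 1)) : ℕ), hlt⟩ : Fin p) = a := Fin.ext (by simp)
  rw [h1]
  unfold Pprod
  congr 1

lemma Gstd_sum_one (s : Fin p → ℝ) : ∑ r : Fin (p + 1), Gstd p s r = 1 := by
  classical
  set g : ℕ → ℝ := fun k => if k ≤ p then Pprod s k else 0 with hg
  have key : ∀ r : Fin (p + 1), Gstd p s r = g (r : ℕ) - g ((r : ℕ) + 1) := by
    intro r
    rw [Gstd_apply]
    by_cases h : (r : ℕ) < p
    · rw [dif_pos h]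
      have h1 : g (r : ℕ) = Pprod s (r : ℕ) := if_pos (le_of_lt h)
      have h2 : g ((r : ℕ) + 1) = Pprod s ((r : ℕ) + 1) := if_pos h
      rw [h1, h2, Pprod_succ s h]
      unfold Pprod
      ring
    · have hr : (r : ℕ) = p := by omega
      rw [dif_neg h]
      have h1 : g (r : ℕ) = Pprod s (r : ℕ) := if_pos (le_of_eq hr)
      have h2 : g ((r : ℕ) + 1) = 0 := if_neg (by omega)
      rw [h1, h2]
      unfold Pprod
      ring
  calc ∑ r : Fin (p + 1), Gstd p s r
      = ∑ r : Fin (p + 1), (g (r : ℕ) - g ((r : ℕ) + 1)) := Finset.sum_congr rfl fun r _ => key r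
    _ = ∑ k ∈ Finset.range (p + 1), (g k - g (k + 1)) := Fin.sum_univ_eq_sum_range (fun k => g k - g (k + 1)) (p + 1)
    _ = g 0 - g (p + 1) := Finset.sum_range_sub' g (p + 1)
    _ = 1 := by
        simp [hg, Pprod]

lemma col_sum (s : Fin p → ℝ) (a : Fin p) : ∑ r : Fin (p + 1), Mval p s r a = 0 := by
  have h1 : HasFDerivAt (fun t : Fin p → ℝ => ∑ r : Fin (p + 1), Gstd p t r)
      (∑ r : Fin (p + 1), Lder p r s) s :=
    HasFDerivAt.fun_sum fun r _ => hasFDerivAt_coord r s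
  have h2 : (fun t : Fin p → ℝ => ∑ r : Fin (p + 1), Gstd p t r) = fun _ => (1 : ℝ) :=
    funext fun t => Gstd_sum_one t
  rw [h2] at h1
  have h3 : (0 : (Fin p → ℝ) →L[ℝ] ℝ) = ∑ r : Fin (p + 1), Lder p r s :=
    (hasFDerivAt_const (1 : ℝ) s).unique h1
  have h4 := congrArg (fun L : (Fin p → ℝ) →L[ℝ] ℝ => L (Pi.single a 1)) h3
  simp only [ContinuousLinearMap.zero_apply, ContinuousLinearMap.sum_apply] at h4
  have h5 : ∑ r : Fin (p + 1), Lder p r s (Pi.single a 1)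
      = ∑ r : Fin (p + 1), Mval p s r a := by
    refine Finset.sum_congr rfl fun r _ => ?_
    rw [Lder_apply, Finset.sum_eq_single a]
    · simp
    · intro b _ hb
      simp [Pi.single_apply, hb]
    · intro h
      exact absurd (Finset.mem_univ a) h
  rw [← h5]
  exact h4.symm

end GstdAux

/-- On the open cube the differential of `G_p` is injective,
`G_p` is injective, and the determinant of the matrix whose columns are the
all-ones vector followed by the partial derivatives of `G_p` is positive. -/
theorem Gstd_orientation (p : ℕ) (hp : 1 ≤ p) :
    (∀ s : Fin p → ℝ, (∀ a, s a ∈ Set.Ioo (0:ℝ) 1) →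
      Function.Injective (fderiv ℝ (Gstd p) s))
    ∧ Set.InjOn (Gstd p) {s | ∀ a, s a ∈ Set.Ioo (0:ℝ) 1}
    ∧ (∀ s : Fin p → ℝ, (∀ a, s a ∈ Set.Ioo (0:ℝ) 1) →
        0 < Matrix.det (GstdMat p s)) := by
  classical
  open GstdAux in
  refine ⟨?_, ?_, ?_⟩
  · -- injectivity of the differential
    intro s hs v w hvw
    have hz : ∀ r : Fin (p + 1), ∑ b : Fin p, Mval p s r b * (v - w) b = 0 := by
      intro r
      have h0 : fderiv ℝ (Gstd p) s (v - w) = 0 := by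
        rw [map_sub, hvw, sub_self]
      have h2 := congrFun h0 r
      rw [fderiv_Gstd_apply] at h2
      simpa using h2
    have main : ∀ n : ℕ, ∀ a : Fin p, (a : ℕ) = n → (v - w) a = 0 := by
      intro n
      induction n using Nat.strong_induction_on with
      | _ n ih =>
        intro a ha
        have hr := hz (Fin.castSucc a)
        rw [Finset.sum_eq_single a] at hr
        · rw [Mval_diag] at hr
          have hP : Pprod s (a : ℕ) ≠ 0 := ne_of_gt (Pprod_pos hs _)
          rcases mul_eq_zero.mp hr with h | h
          · exact absurd (neg_eq_zero.mp h) hP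
          · exact h
        · intro b _ hb
          have hne : (b : ℕ) ≠ (a : ℕ) := fun hc => hb (Fin.ext hc)
          rcases lt_or_gt_of_ne hne with h | h
          · rw [ih (b : ℕ) (by omega) b rfl, mul_zero]
          · rw [Mval_zero s (by simpa using h), zero_mul]
        · intro h
          exact absurd (Finset.mem_univ a) h
    have hvw0 : v - w = 0 := funext fun a => main (a : ℕ) a rfl
    exact sub_eq_zero.mp hvw0
  · -- injectivity of Gstd on the open cube
    intro s hs t ht h
    have main : ∀ n : ℕ, ∀ a : Fin p, (a : ℕ) = n → s a = t a := by
      intro n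
      induction n using Nat.strong_induction_on with
      | _ n ih =>
        intro a ha
        have hc := congrFun h (Fin.castSucc a)
        rw [Gstd_castSucc, Gstd_castSucc] at hc
        have hPeq : Pprod s (a : ℕ) = Pprod t (a : ℕ) := by
          unfold Pprod
          refine Finset.prod_congr rfl fun b hb => ?_
          have hb' : (b : ℕ) < (a : ℕ) := (Finset.mem_filter.mp hb).2
          exact ih (b : ℕ) (by omega) b rfl
        have hP0 : Pprod s (a : ℕ) ≠ 0 := ne_of_gt (Pprod_pos hs _)
        rw [← hPeq] at hc
        have hcc := mul_left_cancel₀ hP0 hc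
        linarith
    exact funext fun a => main (a : ℕ) a rfl
  · -- positivity of the determinant
    intro s hs
    have hA0 : ∀ r : Fin (p + 1), GstdMat p s r 0 = 1 := by
      intro r
      simp [GstdMat]
    have hAsucc : ∀ (r : Fin (p + 1)) (a : Fin p),
        GstdMat p s r (Fin.succ a) = Mval p s r a := by
      intro r a
      simp only [GstdMat, Matrix.of_apply, Fin.cases_succ]
      exact fderiv_Gstd_single s a r
    have hdet1 := Matrix.det_updateRow_sum (GstdMat p s) (Fin.last p) (fun _ => (1 : ℝ))
    simp only [one_smul, smul_eq_mul, one_mul] at hdet1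
    set B := (GstdMat p s).updateRow (Fin.last p) (∑ k, GstdMat p s k) with hB
    have hBlast : ∀ c, B (Fin.last p) c = ∑ k : Fin (p + 1), GstdMat p s k c := by
      intro c
      rw [hB, Matrix.updateRow_self]
      exact Finset.sum_apply _ _ _
    have hBlast0 : B (Fin.last p) 0 = (p : ℝ) + 1 := by
      rw [hBlast]
      rw [Finset.sum_congr rfl fun k _ => hA0 k]
      simp
    have hBlastsucc : ∀ a : Fin p, B (Fin.last p) (Fin.succ a) = 0 := by
      intro a
      rw [hBlast]
      calc ∑ k : Fin (p + 1), GstdMat p s k (Fin.succ a)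
          = ∑ k : Fin (p + 1), Mval p s k a :=
            Finset.sum_congr rfl fun k _ => hAsucc k a
        _ = 0 := col_sum s a
    have hBrow : ∀ (l : Fin p) (c : Fin (p + 1)),
        B (Fin.castSucc l) c = GstdMat p s (Fin.castSucc l) c := by
      intro l c
      rw [hB, Matrix.updateRow_ne (Fin.castSucc_lt_last l).ne]
    have hCval : ∀ l a : Fin p,
        B.submatrix (Fin.last p).succAbove (0 : Fin (p + 1)).succAbove l a
          = Mval p s (Fin.castSucc l) a := by
      intro l a
      rw [Matrix.submatrix_apply, Fin.succAbove_last_apply, Fin.succAbove_zero_apply,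
        hBrow, hAsucc]
    have hCdet : (B.submatrix (Fin.last p).succAbove (0 : Fin (p + 1)).succAbove).det
        = (-1 : ℝ) ^ p * ∏ l : Fin p, Pprod s (l : ℕ) := by
      have htri : (B.submatrix (Fin.last p).succAbove
          (0 : Fin (p + 1)).succAbove).BlockTriangular OrderDual.toDual := by
        intro i j hij
        have hij' : i < j := hij
        rw [hCval]
        exact Mval_zero s (by simpa using hij')
      rw [Matrix.det_of_lowerTriangular _ htri]
      calc ∏ l : Fin p, B.submatrix (Fin.last p).succAbove (0 : Fin (p + 1)).succAbove l l
          = ∏ l : Fin p, -(Pprod s (l : ℕ)) :=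
            Finset.prod_congr rfl fun l _ => by rw [hCval, Mval_diag]
        _ = ∏ l : Fin p, ((-1) * Pprod s (l : ℕ)) :=
            Finset.prod_congr rfl fun l _ => by ring
        _ = (∏ _l : Fin p, (-1 : ℝ)) * ∏ l : Fin p, Pprod s (l : ℕ) :=
            Finset.prod_mul_distrib
        _ = (-1 : ℝ) ^ p * ∏ l : Fin p, Pprod s (l : ℕ) := by
            rw [Finset.prod_const, Finset.card_univ, Fintype.card_fin]
    have hdet2 := Matrix.det_succ_row B (Fin.last p)
    rw [Finset.sum_eq_single (0 : Fin (p + 1))] at hdet2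
    · rw [hBlast0, hCdet] at hdet2
      have hPpos : 0 < ∏ l : Fin p, Pprod s (l : ℕ) :=
        Finset.prod_pos fun l _ => Pprod_pos hs _
      have hsq : (-1 : ℝ) ^ p * (-1 : ℝ) ^ p = 1 := by
        rw [← pow_add]
        exact Even.neg_one_pow ⟨p, rfl⟩
      have hfinal : (GstdMat p s).det
          = ((p : ℝ) + 1) * ∏ l : Fin p, Pprod s (l : ℕ) := by
        rw [← hdet1, hdet2]
        have hlast : ((Fin.last p : Fin (p + 1)) : ℕ) = p := rfl
        have hzero : ((0 : Fin (p + 1)) : ℕ) = 0 := rfl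
        rw [hlast, hzero, add_zero]
        linear_combination (((p : ℝ) + 1) * ∏ l : Fin p, Pprod s (l : ℕ)) * hsq
      rw [hfinal]
      have hp1 : (0 : ℝ) < (p : ℝ) + 1 := by positivity
      exact mul_pos hp1 hPpos
    · intro j _ hj
      induction j using Fin.cases with
      | zero => exact absurd rfl hj
      | succ a =>
        rw [hBlastsucc]
        ring
    · intro hmem
      exact absurd (Finset.mem_univ _) hmem


end
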